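/- Let a ∈ (0,∞], I = [0,a), let F₁ and F₂ be admissible on I, and let Ω be a convex domain in ℝⁿ (n ≥ 1). Then C_Ω[F₁] = C_Ω[F₂] if and only if there exists a pair (A,B) ∈ (0,∞) × ℝ such that F₁(r) = A·F₂(r) + B for all r ∈ (0,a). -/

import Mathlib

open Set Filter
open scoped ENNReal Topology

noncomputable section

/-- The interval `I = [0,a)` for `a ∈ (0,∞]`, as a subset of `ℝ`. -/
def intervalI (a : ℝ≥0∞) : Set ℝ := {r : ℝ | 0 ≤ r ∧ ENNReal.ofReal r < a}

/-- The interior `(0,a)` of `I = [0,a)`. -/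
def intervalI₀ (a : ℝ≥0∞) : Set ℝ := {r : ℝ | 0 < r ∧ ENNReal.ofReal r < a}

/-- `F : I → [-∞,∞)` is admissible on `I = [0,a)`: continuous on `(0,a)`,
strictly increasing on `I`, `F(0) = -∞`, and never `+∞` on `I`. -/
structure IsAdmissible (a : ℝ≥0∞) (F : ℝ → EReal) : Prop where
  continuousOn : ContinuousOn F (intervalI₀ a)
  strictMonoOn : StrictMonoOn F (intervalI a)
  map_zero : F 0 = ⊥
  lt_top : ∀ r ∈ intervalI a, F r < ⊤

/-- `f` is `F`-concave on `Ω`: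
`F(f((1-λ)x+λy)) ≥ (1-λ)F(f(x)) + λF(f(y))` for `x,y ∈ Ω`, `λ ∈ (0,1)`. -/
def FConcaveOn {E : Type*} [AddCommGroup E] [Module ℝ E]
    (F : ℝ → EReal) (Ω : Set E) (f : E → ℝ) : Prop :=
  ∀ x ∈ Ω, ∀ y ∈ Ω, ∀ lam : ℝ, lam ∈ Ioo (0:ℝ) 1 →
    ((1 - lam : ℝ) : EReal) * F (f x) + (lam : EReal) * F (f y)
      ≤ F (f ((1 - lam) • x + lam • y))

/-- `C_Ω[F]`: the set of `F`-concave functions on `Ω` with values in `I = [0,a)`. -/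
def CSet {E : Type*} [AddCommGroup E] [Module ℝ E]
    (a : ℝ≥0∞) (F : ℝ → EReal) (Ω : Set E) : Set (E → ℝ) :=
  {f | MapsTo f Ω (intervalI a) ∧ FConcaveOn F Ω f}

namespace Aux
variable {a : ℝ≥0∞}

lemma I0_sub : intervalI₀ a ⊆ intervalI a := fun r hr => ⟨hr.1.le, hr.2⟩

lemma zero_mem (ha : 0 < a) : (0:ℝ) ∈ intervalI a := ⟨le_rfl, by simpa using ha⟩

lemma I0_ordConn : (intervalI₀ a).OrdConnected := by
  constructor
  intro x hx y hy t ht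
  exact ⟨lt_of_lt_of_le hx.1 ht.1,
    lt_of_le_of_lt (ENNReal.ofReal_le_ofReal ht.2) hy.2⟩

lemma exists_pair (ha : 0 < a) : ∃ x y : ℝ, x ∈ intervalI₀ a ∧ y ∈ intervalI₀ a ∧ x < y := by
  rcases eq_or_ne a ⊤ with rfl | hne
  · exact ⟨1, 2, ⟨one_pos, by simp [ENNReal.ofReal_lt_top]⟩,
      ⟨two_pos, by simp [ENNReal.ofReal_lt_top]⟩, one_lt_two⟩
  · have h0 : 0 < a.toReal := ENNReal.toReal_pos ha.ne' hne
    refine ⟨a.toReal/3, a.toReal/2, ⟨by linarith, ?_⟩, ⟨by linarith, ?_⟩, by linarith⟩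
    · rw [ENNReal.ofReal_lt_iff_lt_toReal (by linarith) hne]; linarith
    · rw [ENNReal.ofReal_lt_iff_lt_toReal (by linarith) hne]; linarith

def ph (F : ℝ → EReal) (r : ℝ) : ℝ := (F r).toReal

variable {F : ℝ → EReal} (hF : IsAdmissible a F)
include hF

lemma F_ne_bot {r : ℝ} (hr : r ∈ intervalI₀ a) : F r ≠ ⊥ := by
  have ha : 0 < a := lt_of_le_of_lt zero_le hr.2
  have := hF.strictMonoOn (zero_mem ha) (I0_sub hr) hr.1
  rw [hF.map_zero] at this
  exact this.ne'

lemma F_eq_coe {r : ℝ} (hr : r ∈ intervalI₀ a) : F r = ((ph F r : ℝ) : EReal) :=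
  (EReal.coe_toReal (hF.lt_top r (I0_sub hr)).ne (F_ne_bot hF hr)).symm

lemma ph_strictMonoOn : StrictMonoOn (ph F) (intervalI₀ a) := by
  intro x hx y hy hxy
  have := hF.strictMonoOn (I0_sub hx) (I0_sub hy) hxy
  rw [F_eq_coe hF hx, F_eq_coe hF hy] at this
  exact_mod_cast this

lemma ph_continuousOn : ContinuousOn (ph F) (intervalI₀ a) := by
  apply EReal.continuousOn_toReal.comp hF.continuousOn
  intro r hr
  simp only [mem_compl_iff, mem_insert_iff, mem_singleton_iff]
  push_neg
  exact ⟨F_ne_bot hF hr, (hF.lt_top r (I0_sub hr)).ne⟩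

lemma im_ordConn : ((ph F) '' (intervalI₀ a)).OrdConnected :=
  ((I0_ordConn.isPreconnected).image _ (ph_continuousOn hF)).ordConnected

end Aux

open Aux

section Main
variable {n : ℕ} {a : ℝ≥0∞} {F₁ F₂ : ℝ → EReal} {Ω : Set (EuclideanSpace ℝ (Fin n))}

lemma main_ineq (hn : 1 ≤ n)
    (hF₁ : IsAdmissible a F₁) (hF₂ : IsAdmissible a F₂)
    (hΩopen : IsOpen Ω) (hΩne : Ω.Nonempty)
    (hsub : CSet a F₂ Ω ⊆ CSet a F₁ Ω)
    {x y m lam : ℝ} (hx : x ∈ intervalI₀ a) (hy : y ∈ intervalI₀ a)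
    (hm : m ∈ intervalI₀ a) (hlam : lam ∈ Ioo (0:ℝ) 1)
    (hmid : ph F₂ m = (1-lam) * ph F₂ x + lam * ph F₂ y) :
    (1-lam) * ph F₁ x + lam * ph F₁ y ≤ ph F₁ m := by
  classical
  have ha : 0 < a := lt_of_le_of_lt zero_le hx.2
  obtain ⟨p, hp⟩ := hΩne
  obtain ⟨ε, hε, hball⟩ := Metric.isOpen_iff.1 hΩopen p hp
  set e : EuclideanSpace ℝ (Fin n) := EuclideanSpace.single ⟨0, hn⟩ (1:ℝ) with he
  have hne : ‖e‖ = 1 := by simp [he, EuclideanSpace.norm_single]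
  have hee : (inner ℝ e e : ℝ) = 1 := by
    rw [real_inner_self_eq_norm_sq, hne]; norm_num
  set q : EuclideanSpace ℝ (Fin n) := p + (ε/2) • e with hq
  have hqΩ : q ∈ Ω := by
    apply hball
    rw [Metric.mem_ball, dist_eq_norm]
    have h1 : q - p = (ε/2) • e := by rw [hq]; abel
    rw [h1, norm_smul, hne]
    simp only [mul_one]
    rw [Real.norm_eq_abs, abs_of_pos (by linarith)]
    linarith
  set L : EuclideanSpace ℝ (Fin n) → ℝ :=
    fun z => ph F₂ x + ((ph F₂ y - ph F₂ x)/(ε/2)) * (inner ℝ (z - p) e : ℝ) with hL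
  have haff : ∀ (u v : EuclideanSpace ℝ (Fin n)) (μ : ℝ),
      L ((1-μ) • u + μ • v) = (1-μ) * L u + μ * L v := by
    intro u v μ
    have h1 : (1-μ) • u + μ • v - p = (1-μ) • (u-p) + μ • (v-p) := by
      module
    simp only [hL, h1, inner_add_left, real_inner_smul_left]
    ring
  have hLp : L p = ph F₂ x := by simp [hL]
  have hLq : L q = ph F₂ y := by
    have h1 : q - p = (ε/2) • e := by rw [hq]; abel
    simp only [hL, h1, real_inner_smul_left, hee, mul_one]
    field_simp; ring
  set M : ℝ := max (ph F₂ x) (ph F₂ y) with hM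
  set Im : Set ℝ := ph F₂ '' intervalI₀ a with hIm
  have hMIm : M ∈ Im := by
    rcases le_total (ph F₂ x) (ph F₂ y) with h | h
    · exact ⟨y, hy, (max_eq_right h).symm⟩
    · exact ⟨x, hx, (max_eq_left h).symm⟩
  set ℓ : EuclideanSpace ℝ (Fin n) → ℝ := fun z => min (L z) M with hℓ
  set f : EuclideanSpace ℝ (Fin n) → ℝ :=
    fun z => if h : ℓ z ∈ Im then Function.invFunOn (ph F₂) (intervalI₀ a) (ℓ z) else 0
    with hf
  have hf_mem : ∀ z, ℓ z ∈ Im → f z ∈ intervalI₀ a ∧ ph F₂ (f z) = ℓ z := by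
    intro z hz
    have hex : ∃ r ∈ intervalI₀ a, ph F₂ r = ℓ z := by
      rcases hz with ⟨r, hr, hrr⟩; exact ⟨r, hr, hrr⟩
    simp only [hf, dif_pos hz]
    exact ⟨Function.invFunOn_mem hex, Function.invFunOn_eq hex⟩
  have hF₂f : ∀ z, ℓ z ∈ Im → F₂ (f z) = ((ℓ z : ℝ) : EReal) := by
    intro z hz
    have h1 := hf_mem z hz
    rw [F_eq_coe hF₂ h1.1, h1.2]
  have hF₂f' : ∀ z, ℓ z ∉ Im → F₂ (f z) = ⊥ := by
    intro z hz
    simp only [hf, dif_neg hz]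
    exact hF₂.map_zero
  have hmaps : MapsTo f Ω (intervalI a) := by
    intro z _
    by_cases hz : ℓ z ∈ Im
    · exact I0_sub (hf_mem z hz).1
    · simp only [hf, dif_neg hz]; exact zero_mem ha
  have hconc : FConcaveOn F₂ Ω f := by
    intro u hu v hv μ hμ
    have hLw := haff u v μ
    have hℓw : (1-μ) * ℓ u + μ * ℓ v ≤ ℓ ((1-μ) • u + μ • v) := by
      apply le_min
      · rw [hLw]
        have h1 : min (L u) M ≤ L u := min_le_left _ _
        have h2 : min (L v) M ≤ L v := min_le_left _ _
        nlinarith [hμ.1, hμ.2]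
      · have h1 : min (L u) M ≤ M := min_le_right _ _
        have h2 : min (L v) M ≤ M := min_le_right _ _
        nlinarith [hμ.1, hμ.2]
    by_cases hu' : ℓ u ∈ Im
    · by_cases hv' : ℓ v ∈ Im
      · have hw' : ℓ ((1-μ) • u + μ • v) ∈ Im := by
          have hmin : min (ℓ u) (ℓ v) ∈ Im := by
            rcases le_total (ℓ u) (ℓ v) with h | h
            · rwa [min_eq_left h]
            · rwa [min_eq_right h]
          apply (im_ordConn hF₂).out hmin hMIm
          constructor
          · have h1 : min (ℓ u) (ℓ v) ≤ ℓ u := min_le_left _ _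
            have h2 : min (ℓ u) (ℓ v) ≤ ℓ v := min_le_right _ _
            nlinarith [hμ.1, hμ.2, hℓw]
          · exact min_le_right _ _
        rw [hF₂f u hu', hF₂f v hv', hF₂f _ hw']
        rw [← EReal.coe_mul, ← EReal.coe_mul, ← EReal.coe_add, EReal.coe_le_coe_iff]
        exact hℓw
      · rw [hF₂f' v hv']
        rw [show ((μ:ℝ) : EReal) * ⊥ = ⊥ from EReal.coe_mul_bot_of_pos hμ.1, EReal.add_bot]
        exact bot_le
    · rw [hF₂f' u hu']
      rw [show ((1-μ:ℝ) : EReal) * ⊥ = ⊥ from EReal.coe_mul_bot_of_pos (by linarith [hμ.2]),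
        EReal.bot_add]
      exact bot_le
  have hfC : f ∈ CSet a F₁ Ω := hsub ⟨hmaps, hconc⟩
  have hinj : InjOn (ph F₂) (intervalI₀ a) := (ph_strictMonoOn hF₂).injOn
  have hℓp : ℓ p = ph F₂ x := by rw [hℓ]; simp only [hLp]; exact min_eq_left (le_max_left _ _)
  have hℓq : ℓ q = ph F₂ y := by rw [hℓ]; simp only [hLq]; exact min_eq_left (le_max_right _ _)
  have hfp : f p = x := by
    have hmm : ℓ p ∈ Im := hℓp ▸ ⟨x, hx, rfl⟩
    have h1 := hf_mem p hmm
    exact hinj h1.1 hx (by rw [h1.2, hℓp])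
  have hfq : f q = y := by
    have hmm : ℓ q ∈ Im := hℓq ▸ ⟨y, hy, rfl⟩
    have h1 := hf_mem q hmm
    exact hinj h1.1 hy (by rw [h1.2, hℓq])
  have hℓw0 : ℓ ((1-lam) • p + lam • q) = ph F₂ m := by
    rw [hℓ]
    simp only [haff p q lam, hLp, hLq]
    rw [← hmid]
    apply min_eq_left
    rw [hmid]
    have h1 : ph F₂ x ≤ M := le_max_left _ _
    have h2 : ph F₂ y ≤ M := le_max_right _ _
    nlinarith [hlam.1, hlam.2]
  have hfw0 : f ((1-lam) • p + lam • q) = m := by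
    have hmm : ℓ ((1-lam) • p + lam • q) ∈ Im := hℓw0 ▸ ⟨m, hm, rfl⟩
    have h1 := hf_mem _ hmm
    exact hinj h1.1 hm (by rw [h1.2, hℓw0])
  have h1 := hfC.2 p hp q hqΩ lam hlam
  rw [hfp, hfq, hfw0] at h1
  rw [F_eq_coe hF₁ hx, F_eq_coe hF₁ hy, F_eq_coe hF₁ hm] at h1
  rw [← EReal.coe_mul, ← EReal.coe_mul, ← EReal.coe_add, EReal.coe_le_coe_iff] at h1
  exact h1

end Main

section Main2
variable {n : ℕ} {a : ℝ≥0∞} {F₁ F₂ : ℝ → EReal} {Ω : Set (EuclideanSpace ℝ (Fin n))}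

lemma eq_combo (hn : 1 ≤ n)
    (hF₁ : IsAdmissible a F₁) (hF₂ : IsAdmissible a F₂)
    (hΩopen : IsOpen Ω) (hΩne : Ω.Nonempty)
    (heq : CSet a F₁ Ω = CSet a F₂ Ω)
    {x y m lam : ℝ} (hx : x ∈ intervalI₀ a) (hy : y ∈ intervalI₀ a)
    (hm : m ∈ intervalI₀ a) (hlam : lam ∈ Ioo (0:ℝ) 1)
    (hmid : ph F₂ m = (1-lam) * ph F₂ x + lam * ph F₂ y) :
    ph F₁ m = (1-lam) * ph F₁ x + lam * ph F₁ y := by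
  have hge := main_ineq hn hF₁ hF₂ hΩopen hΩne heq.symm.subset hx hy hm hlam hmid
  by_contra hne'
  have hlt : (1-lam) * ph F₁ x + lam * ph F₁ y < ph F₁ m :=
    lt_of_le_of_ne hge (fun h => hne' h.symm)
  have hc₁ : (1-lam) * ph F₁ x + lam * ph F₁ y ∈ ph F₁ '' intervalI₀ a := by
    have hmin : min (ph F₁ x) (ph F₁ y) ∈ ph F₁ '' intervalI₀ a := by
      rcases le_total (ph F₁ x) (ph F₁ y) with h | h
      · rw [min_eq_left h]; exact ⟨x, hx, rfl⟩
      · rw [min_eq_right h]; exact ⟨y, hy, rfl⟩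
    have hmax : max (ph F₁ x) (ph F₁ y) ∈ ph F₁ '' intervalI₀ a := by
      rcases le_total (ph F₁ x) (ph F₁ y) with h | h
      · rw [max_eq_right h]; exact ⟨y, hy, rfl⟩
      · rw [max_eq_left h]; exact ⟨x, hx, rfl⟩
    apply (im_ordConn hF₁).out hmin hmax
    constructor
    · have h1 : min (ph F₁ x) (ph F₁ y) ≤ ph F₁ x := min_le_left _ _
      have h2 : min (ph F₁ x) (ph F₁ y) ≤ ph F₁ y := min_le_right _ _
      nlinarith [hlam.1, hlam.2]
    · have h1 : ph F₁ x ≤ max (ph F₁ x) (ph F₁ y) := le_max_left _ _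
      have h2 : ph F₁ y ≤ max (ph F₁ x) (ph F₁ y) := le_max_right _ _
      nlinarith [hlam.1, hlam.2]
  obtain ⟨m', hm', hphm'⟩ := hc₁
  have h2 := main_ineq hn hF₂ hF₁ hΩopen hΩne heq.subset hx hy hm' hlam hphm'
  have h4 : m' < m := by
    refine ((ph_strictMonoOn hF₁).lt_iff_lt hm' hm).1 ?_
    rw [hphm']; exact hlt
  have h5 : ph F₂ m' < ph F₂ m := ph_strictMonoOn hF₂ hm' hm h4
  rw [hmid] at h5
  linarith

end Main2

lemma conc_of_rel {E : Type*} [AddCommGroup E] [Module ℝ E] {Ω : Set E}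
    {a : ℝ≥0∞} {F₁ F₂ : ℝ → EReal} {A B : ℝ} (hA : 0 < A)
    (hΩconv : Convex ℝ Ω)
    (hF₂top : ∀ r ∈ intervalI a, F₂ r < ⊤)
    (hrel : ∀ r ∈ intervalI a, F₁ r = (A:EReal) * F₂ r + (B:EReal)) :
    CSet a F₂ Ω ⊆ CSet a F₁ Ω := by
  rintro f ⟨hmaps, hconc⟩
  refine ⟨hmaps, ?_⟩
  intro u hu v hv lam hlam
  have hwΩ : (1-lam) • u + lam • v ∈ Ω :=
    hΩconv hu hv (by linarith [hlam.2]) hlam.1.le (by ring)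
  have h := hconc u hu v hv lam hlam
  rw [hrel _ (hmaps hu), hrel _ (hmaps hv), hrel _ (hmaps hwΩ)]
  rcases eq_or_ne (F₂ (f u)) ⊥ with hbu | hbu
  · rw [hbu, show (A:EReal) * ⊥ = ⊥ from EReal.coe_mul_bot_of_pos hA, EReal.bot_add,
      show ((1-lam:ℝ):EReal) * ⊥ = ⊥ from EReal.coe_mul_bot_of_pos (by linarith [hlam.2]),
      EReal.bot_add]
    exact bot_le
  rcases eq_or_ne (F₂ (f v)) ⊥ with hbv | hbv
  · rw [hbv, show (A:EReal) * ⊥ = ⊥ from EReal.coe_mul_bot_of_pos hA, EReal.bot_add,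
      show ((lam:ℝ):EReal) * ⊥ = ⊥ from EReal.coe_mul_bot_of_pos hlam.1,
      EReal.add_bot]
    exact bot_le
  have hcu : F₂ (f u) = ((F₂ (f u)).toReal : EReal) :=
    (EReal.coe_toReal (hF₂top _ (hmaps hu)).ne hbu).symm
  have hcv : F₂ (f v) = ((F₂ (f v)).toReal : EReal) :=
    (EReal.coe_toReal (hF₂top _ (hmaps hv)).ne hbv).symm
  set c1 : ℝ := (F₂ (f u)).toReal
  set c2 : ℝ := (F₂ (f v)).toReal
  rw [hcu, hcv] at h ⊢
  rw [← EReal.coe_mul, ← EReal.coe_mul, ← EReal.coe_add] at h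
  have hbw : F₂ (f ((1-lam) • u + lam • v)) ≠ ⊥ := by
    intro hb
    rw [hb] at h
    exact (EReal.coe_ne_bot _) (le_bot_iff.1 h)
  have hcw : F₂ (f ((1-lam) • u + lam • v)) = ((F₂ (f ((1-lam) • u + lam • v))).toReal : EReal) :=
    (EReal.coe_toReal (hF₂top _ (hmaps hwΩ)).ne hbw).symm
  set c3 : ℝ := (F₂ (f ((1-lam) • u + lam • v))).toReal
  rw [hcw] at h ⊢
  rw [EReal.coe_le_coe_iff] at h
  have key : (1-lam) * (A * c1 + B) + lam * (A * c2 + B) ≤ A * c3 + B := by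
    nlinarith [hA]
  calc ((1 - lam:ℝ):EReal) * ((A:EReal) * (c1:EReal) + (B:EReal))
        + ((lam:ℝ):EReal) * ((A:EReal) * (c2:EReal) + (B:EReal))
      = (((1-lam) * (A * c1 + B) + lam * (A * c2 + B) : ℝ) : EReal) := by
        rw [← EReal.coe_mul, ← EReal.coe_add, ← EReal.coe_mul,
          ← EReal.coe_mul, ← EReal.coe_add, ← EReal.coe_mul, ← EReal.coe_add]
    _ ≤ ((A * c3 + B : ℝ) : EReal) := EReal.coe_le_coe_iff.2 key
    _ = (A:EReal) * (c3:EReal) + (B:EReal) := by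
        rw [EReal.coe_add, EReal.coe_mul]


/-- `C_Ω[F₁] = C_Ω[F₂]` iff `F₁ = A·F₂ + B` on `(0,a)` for some
`A ∈ (0,∞)` and `B ∈ ℝ`. -/
theorem stmt1 {n : ℕ} (hn : 1 ≤ n) (a : ℝ≥0∞) (ha : 0 < a)
    (F₁ F₂ : ℝ → EReal) (hF₁ : IsAdmissible a F₁) (hF₂ : IsAdmissible a F₂)
    (Ω : Set (EuclideanSpace ℝ (Fin n)))
    (hΩconv : Convex ℝ Ω) (hΩopen : IsOpen Ω) (hΩne : Ω.Nonempty) :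
    CSet a F₁ Ω = CSet a F₂ Ω ↔
      ∃ A B : ℝ, 0 < A ∧
        ∀ r ∈ intervalI₀ a, F₁ r = (A : EReal) * F₂ r + (B : EReal) := by
  constructor
  · intro heq
    obtain ⟨x₀, y₀, hx₀, hy₀, hxy₀⟩ := exists_pair ha
    have hD2 : ph F₂ x₀ < ph F₂ y₀ := ph_strictMonoOn hF₂ hx₀ hy₀ hxy₀
    have hD1 : ph F₁ x₀ < ph F₁ y₀ := ph_strictMonoOn hF₁ hx₀ hy₀ hxy₀
    refine ⟨(ph F₁ y₀ - ph F₁ x₀)/(ph F₂ y₀ - ph F₂ x₀),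
      ph F₁ x₀ - (ph F₁ y₀ - ph F₁ x₀)/(ph F₂ y₀ - ph F₂ x₀) * ph F₂ x₀,
      div_pos (by linarith) (by linarith), ?_⟩
    intro r hr
    have hden : ph F₂ y₀ - ph F₂ x₀ ≠ 0 := by linarith
    have key : ph F₁ r = (ph F₁ y₀ - ph F₁ x₀)/(ph F₂ y₀ - ph F₂ x₀) * ph F₂ r +
        (ph F₁ x₀ - (ph F₁ y₀ - ph F₁ x₀)/(ph F₂ y₀ - ph F₂ x₀) * ph F₂ x₀) := by
      rcases lt_trichotomy r x₀ with h | h | h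
      · have hs2 : ph F₂ r < ph F₂ x₀ := ph_strictMonoOn hF₂ hr hx₀ h
        have hs1 : ph F₁ r < ph F₁ x₀ := ph_strictMonoOn hF₁ hr hx₀ h
        have hden2 : ph F₂ y₀ - ph F₂ r ≠ 0 := by linarith
        have hlam : (ph F₂ x₀ - ph F₂ r)/(ph F₂ y₀ - ph F₂ r) ∈ Ioo (0:ℝ) 1 :=
          ⟨div_pos (by linarith) (by linarith), (div_lt_one (by linarith)).2 (by linarith)⟩
        have hmid : ph F₂ x₀ = (1-(ph F₂ x₀ - ph F₂ r)/(ph F₂ y₀ - ph F₂ r)) * ph F₂ r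
            + (ph F₂ x₀ - ph F₂ r)/(ph F₂ y₀ - ph F₂ r) * ph F₂ y₀ := by
          field_simp; ring
        have eqc := eq_combo hn hF₁ hF₂ hΩopen hΩne heq hr hy₀ hx₀ hlam hmid
        field_simp at eqc ⊢
        linear_combination -eqc
      · subst h; field_simp; ring
      · rcases lt_trichotomy r y₀ with h' | h' | h'
        · have hs2 : ph F₂ x₀ < ph F₂ r := ph_strictMonoOn hF₂ hx₀ hr h
          have hs2' : ph F₂ r < ph F₂ y₀ := ph_strictMonoOn hF₂ hr hy₀ h'
          have hlam : (ph F₂ r - ph F₂ x₀)/(ph F₂ y₀ - ph F₂ x₀) ∈ Ioo (0:ℝ) 1 :=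
            ⟨div_pos (by linarith) (by linarith), (div_lt_one (by linarith)).2 (by linarith)⟩
          have hmid : ph F₂ r = (1-(ph F₂ r - ph F₂ x₀)/(ph F₂ y₀ - ph F₂ x₀)) * ph F₂ x₀
              + (ph F₂ r - ph F₂ x₀)/(ph F₂ y₀ - ph F₂ x₀) * ph F₂ y₀ := by
            field_simp; ring
          have eqc := eq_combo hn hF₁ hF₂ hΩopen hΩne heq hx₀ hy₀ hr hlam hmid
          field_simp at eqc ⊢
          linear_combination eqc
        · subst h'; field_simp; ring
        · have hs2 : ph F₂ x₀ < ph F₂ r := ph_strictMonoOn hF₂ hx₀ hr h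
          have hs2' : ph F₂ y₀ < ph F₂ r := ph_strictMonoOn hF₂ hy₀ hr h'
          have hden2 : ph F₂ r - ph F₂ x₀ ≠ 0 := by linarith
          have hlam : (ph F₂ y₀ - ph F₂ x₀)/(ph F₂ r - ph F₂ x₀) ∈ Ioo (0:ℝ) 1 :=
            ⟨div_pos (by linarith) (by linarith), (div_lt_one (by linarith)).2 (by linarith)⟩
          have hmid : ph F₂ y₀ = (1-(ph F₂ y₀ - ph F₂ x₀)/(ph F₂ r - ph F₂ x₀)) * ph F₂ x₀
              + (ph F₂ y₀ - ph F₂ x₀)/(ph F₂ r - ph F₂ x₀) * ph F₂ r := by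
            field_simp; ring
          have eqc := eq_combo hn hF₁ hF₂ hΩopen hΩne heq hx₀ hr hy₀ hlam hmid
          field_simp at eqc ⊢
          linear_combination -eqc
    rw [F_eq_coe hF₁ hr, F_eq_coe hF₂ hr, key, EReal.coe_add, EReal.coe_mul]
  · rintro ⟨A, B, hA, hrel₀⟩
    have hrelI : ∀ r ∈ intervalI a, F₁ r = (A:EReal) * F₂ r + (B:EReal) := by
      intro r hr
      rcases eq_or_lt_of_le hr.1 with h0 | h0
      · rw [← h0, hF₁.map_zero, hF₂.map_zero,
          show (A:EReal) * ⊥ = ⊥ from EReal.coe_mul_bot_of_pos hA, EReal.bot_add]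
      · exact hrel₀ r ⟨h0, hr.2⟩
    have hrelI' : ∀ r ∈ intervalI a, F₂ r = ((A⁻¹:ℝ):EReal) * F₁ r + ((-(B/A):ℝ):EReal) := by
      intro r hr
      rcases eq_or_lt_of_le hr.1 with h0 | h0
      · rw [← h0, hF₁.map_zero, hF₂.map_zero,
          show ((A⁻¹:ℝ):EReal) * ⊥ = ⊥ from EReal.coe_mul_bot_of_pos (by positivity),
          EReal.bot_add]
      · have hrI0 : r ∈ intervalI₀ a := ⟨h0, hr.2⟩
        rw [hrelI r hr, F_eq_coe hF₂ hrI0]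
        have hc : (A⁻¹ * (A * ph F₂ r + B) + (-(B/A)) : ℝ) = ph F₂ r := by
          field_simp; ring
        rw [show ((A⁻¹:ℝ):EReal) * ((A:EReal) * ((ph F₂ r:ℝ):EReal) + (B:EReal))
              + ((-(B/A):ℝ):EReal)
            = ((A⁻¹ * (A * ph F₂ r + B) + (-(B/A)) : ℝ) : EReal) by
          rw [← EReal.coe_mul, ← EReal.coe_add, ← EReal.coe_mul, ← EReal.coe_add], hc]
    apply Subset.antisymm
    · exact conc_of_rel (by positivity) hΩconv (fun r hr => hF₁.lt_top r hr) hrelI'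
    · exact conc_of_rel hA hΩconv (fun r hr => hF₂.lt_top r hr) hrelI
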